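/- If G is a connected graph with non-increasing degree sequence d = (d_1, ..., d_n) and exactly n - 1 + k edges for some non-negative integer k, then γ(G) ≤ 3·sl(d) + 2k - 2. -/

import Mathlib

open Finset

/-- The degree of a vertex in a simple graph. -/
noncomputable def deg {V : Type*} (G : SimpleGraph V) (v : V) : ℕ := Nat.card {u // G.Adj v u}

/-- `D` is a dominating set of `G`. -/
def DomSet {V : Type*} (G : SimpleGraph V) (D : Set V) : Prop := ∀ v ∉ D, ∃ u ∈ D, G.Adj u v

/-- `S` is an independent set of `G`. -/
def IndepSet {V : Type*} (G : SimpleGraph V) (S : Set V) : Prop :=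
  ∀ u ∈ S, ∀ v ∈ S, ¬ G.Adj u v

/-- The domination number of `G`. -/
noncomputable def domNum {V : Type*} [Fintype V] (G : SimpleGraph V) : ℕ :=
  sInf {k | ∃ D : Finset V, D.card = k ∧ DomSet G ↑D}

/-- The independence number of `G`. -/
noncomputable def indepNum {V : Type*} [Fintype V] (G : SimpleGraph V) : ℕ :=
  sSup {k | ∃ S : Finset V, S.card = k ∧ IndepSet G ↑S}

/-- Sum of the first `k` entries `d_1 + ... + d_k` (0-indexed: indices `< k`). -/
def psum {n : ℕ} (d : Fin n → ℕ) (k : ℕ) : ℕ := ∑ i : Fin n, if (i : ℕ) < k then d i else 0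

/-- Sum of the remaining entries `d_{k+1} + ... + d_n` (0-indexed: indices `≥ k`). -/
def ssum {n : ℕ} (d : Fin n → ℕ) (k : ℕ) : ℕ := ∑ i : Fin n, if k ≤ (i : ℕ) then d i else 0

/-- Slater's bound `sl(d) = min{k ∈ [n] : d_1 + ... + d_k ≥ n - k}`. -/
noncomputable def slater (n : ℕ) (d : Fin n → ℕ) : ℕ := sInf {k | 1 ≤ k ∧ k ≤ n ∧ n - k ≤ psum d k}

/-- The annihilation number `a(d) = n - min{k ∈ [n] : Σ_{i≤k} d_i ≥ Σ_{i>k} d_i}`. -/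
noncomputable def annih (n : ℕ) (d : Fin n → ℕ) : ℕ := n - sInf {k | 1 ≤ k ∧ k ≤ n ∧ ssum d k ≤ psum d k}

/-- The number of entries of `d` equal to `j`. -/
def nCount {n : ℕ} (d : Fin n → ℕ) (j : ℕ) : ℕ := (Finset.univ.filter fun i => d i = j).card

/-- The number of entries of `d` that are at least `2`. -/
def nGe2 {n : ℕ} (d : Fin n → ℕ) : ℕ := (Finset.univ.filter fun i => 2 ≤ d i).card

/-- `F` is a forest realization of the degree sequence `d`. -/
def IsForestReal {n : ℕ} (d : Fin n → ℕ) (F : SimpleGraph (Fin n)) : Prop :=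
  F.IsAcyclic ∧ ∀ i, deg F i = d i

/-- The minimum domination number over all forest realizations of `d`. -/
noncomputable def gammaFmin {n : ℕ} (d : Fin n → ℕ) : ℕ :=
  sInf {m | ∃ F : SimpleGraph (Fin n), IsForestReal d F ∧ domNum F = m}

/-- The maximum independence number over all forest realizations of `d`. -/
noncomputable def alphaFmax {n : ℕ} (d : Fin n → ℕ) : ℕ :=
  sSup {m | ∃ F : SimpleGraph (Fin n), IsForestReal d F ∧ indepNum F = m}

lemma deg_eq_degree {V : Type*} [Fintype V] (G : SimpleGraph V) [DecidableRel G.Adj] (v : V) :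
    deg G v = G.degree v := by
  rw [deg]
  have : {u // G.Adj v u} = ↥(G.neighborSet v) := rfl
  rw [this, Nat.card_eq_fintype_card]
  exact G.card_neighborSet_eq_degree v

lemma exists_closer {V : Type*} {G : SimpleGraph V} (hconn : G.Connected) {v r : V} (hne : v ≠ r) :
    ∃ w, G.Adj v w ∧ G.dist w r < G.dist v r := by
  obtain ⟨p, hp⟩ := hconn.exists_walk_length_eq_dist v r
  cases p with
  | nil => exact absurd rfl hne
  | cons h q =>
    refine ⟨_, h, ?_⟩
    have h2 := SimpleGraph.dist_le q
    simp only [SimpleGraph.Walk.length_cons] at hp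
    omega

theorem stmt7 {n : ℕ} (d : Fin n → ℕ) (hd : Antitone d) (G : SimpleGraph (Fin n))
    (hconn : G.Connected) (hdeg : ∀ i, deg G i = d i) (k : ℕ)
    (hm : G.edgeSet.ncard = n - 1 + k) :
    domNum G ≤ 3 * slater n d + 2 * k - 2 := by
  classical
  have hne : Nonempty (Fin n) := hconn.nonempty
  have hn : 1 ≤ n := Fin.pos_iff_nonempty.mpr hne
  have hset : slater n d ∈ {j | 1 ≤ j ∧ j ≤ n ∧ n - j ≤ psum d j} :=
    Nat.sInf_mem ⟨n, hn, le_refl n, by simp⟩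
  set s := slater n d with hsdef
  obtain ⟨hs1, hsn, hps⟩ := hset
  set S : Finset (Fin n) := univ.filter (fun i => (i:ℕ) < s) with hS
  have hScard : S.card ≤ s := by
    have hsub : S.image Fin.val ⊆ Finset.range s := by
      intro x hx
      simp only [hS, Finset.mem_image, Finset.mem_filter] at hx
      obtain ⟨i, ⟨_, hi⟩, rfl⟩ := hx
      exact Finset.mem_range.mpr hi
    calc S.card = (S.image Fin.val).card := (Finset.card_image_of_injective _ Fin.val_injective).symm
      _ ≤ s := le_trans (Finset.card_le_card hsub) (by simp)
  have hsumS : n - s ≤ ∑ i ∈ S, G.degree i := by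
    have h1 : psum d s = ∑ i ∈ S, d i := by
      rw [psum, hS, Finset.sum_filter]
    have h2 : ∀ i ∈ S, d i = G.degree i := fun i _ => by rw [← hdeg i, deg_eq_degree]
    rw [h1, Finset.sum_congr rfl h2] at hps
    exact hps
  set E := G.edgeFinset with hE
  have hmE : E.card = n - 1 + k := by
    rw [← hm, ← Set.ncard_coe_finset E, hE, SimpleGraph.coe_edgeFinset]
  set P1 : Sym2 (Fin n) → Prop := fun e => ∀ x ∈ e, x ∈ S with hP1
  set P3 : Sym2 (Fin n) → Prop := fun e => ∀ x ∈ e, x ∉ S with hP3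
  set E1 := E.filter P1 with hE1
  set E2 := E.filter (fun e => ¬ P1 e ∧ ¬ P3 e) with hE2
  set E3 := E.filter P3 with hE3
  have hP3P1 : ∀ e : Sym2 (Fin n), P3 e → ¬ P1 e := by
    intro e h3 h1
    induction e with
    | _ a b => exact h3 a (Sym2.mem_mk_left a b) (h1 a (Sym2.mem_mk_left a b))
  have hsplit : E.filter (fun e => ¬ P1 e) = E2 ∪ E3 ∧ Disjoint E2 E3 := by
    constructor
    · ext e
      simp only [hE2, hE3, Finset.mem_union, Finset.mem_filter]
      constructor
      · rintro ⟨he, h1⟩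
        by_cases h3 : P3 e
        · exact Or.inr ⟨he, h3⟩
        · exact Or.inl ⟨he, h1, h3⟩
      · rintro (⟨he, h1, _⟩ | ⟨he, h3⟩)
        · exact ⟨he, h1⟩
        · exact ⟨he, hP3P1 e h3⟩
    · rw [Finset.disjoint_left]
      rintro e he he3
      simp only [hE2, hE3, Finset.mem_filter] at he he3
      exact he.2.2 he3.2
  have hpart : E1.card + E2.card + E3.card = n - 1 + k := by
    rw [← hmE, ← Finset.card_filter_add_card_filter_not (p := P1) (s := E), ← hE1,
      hsplit.1, Finset.card_union_of_disjoint hsplit.2]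
    ring
  -- double counting
  have hcount : ∑ i ∈ S, G.degree i = ∑ e ∈ E, (S.filter (fun i => i ∈ e)).card := by
    have hdeg2 : ∀ i ∈ S, G.degree i = (E.filter (fun e => i ∈ e)).card := by
      intro i _
      have : E.filter (fun e => i ∈ e) = G.incidenceFinset i := by
        ext e
        simp only [hE, Finset.mem_filter, SimpleGraph.mem_edgeFinset,
          SimpleGraph.mem_incidenceFinset, SimpleGraph.incidenceSet, Set.mem_setOf_eq,
          SimpleGraph.mem_incidenceSet]
      rw [this, SimpleGraph.card_incidenceFinset_eq_degree]
    rw [Finset.sum_congr rfl hdeg2]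
    simp only [Finset.card_filter]
    exact Finset.sum_comm
  have hw1 : ∀ e ∈ E1, (S.filter (fun i => i ∈ e)).card ≤ 2 := by
    intro e _
    induction e with
    | _ a b =>
      have : S.filter (fun i => i ∈ s(a, b)) ⊆ {a, b} := by
        intro x hx
        simp only [Finset.mem_filter, Sym2.mem_iff] at hx
        simp only [Finset.mem_insert, Finset.mem_singleton]
        exact hx.2
      exact le_trans (Finset.card_le_card this) (le_trans (Finset.card_insert_le _ _) (by simp))
  have hw2 : ∀ e ∈ E2, (S.filter (fun i => i ∈ e)).card ≤ 1 := by
    intro e he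
    simp only [hE2, Finset.mem_filter] at he
    obtain ⟨_, h1, _⟩ := he
    simp only [hP1, not_forall] at h1
    obtain ⟨x, hxe, hxS⟩ := h1
    induction e with
    | _ a b =>
      rw [Sym2.mem_iff] at hxe
      have hsub : S.filter (fun i => i ∈ s(a, b)) ⊆ {a, b} \ {x} := by
        intro y hy
        simp only [Finset.mem_filter, Sym2.mem_iff] at hy
        simp only [Finset.mem_sdiff, Finset.mem_insert, Finset.mem_singleton]
        refine ⟨hy.2, ?_⟩
        rintro rfl
        exact hxS hy.1
      refine le_trans (Finset.card_le_card hsub) ?_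
      rcases hxe with rfl | rfl
      · refine le_trans (Finset.card_le_card (t := {b}) ?_) (by simp)
        intro y hy
        simp only [Finset.mem_sdiff, Finset.mem_insert, Finset.mem_singleton] at hy ⊢
        rcases hy.1 with rfl | rfl
        · exact absurd rfl hy.2
        · rfl
      · refine le_trans (Finset.card_le_card (t := {a}) ?_) (by simp)
        intro y hy
        simp only [Finset.mem_sdiff, Finset.mem_insert, Finset.mem_singleton] at hy ⊢
        rcases hy.1 with rfl | rfl
        · rfl
        · exact absurd rfl hy.2
  have hw3 : ∀ e ∈ E3, (S.filter (fun i => i ∈ e)).card = 0 := by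
    intro e he
    simp only [hE3, Finset.mem_filter] at he
    rw [Finset.card_eq_zero, Finset.filter_eq_empty_iff]
    intro i hi hie
    exact he.2 i hie hi
  have hdouble : ∑ i ∈ S, G.degree i ≤ 2 * E1.card + E2.card := by
    rw [hcount, ← Finset.sum_filter_add_sum_filter_not E P1, ← hE1, hsplit.1,
      Finset.sum_union hsplit.2]
    have b1 : ∑ e ∈ E1, (S.filter (fun i => i ∈ e)).card ≤ E1.card * 2 :=
      Finset.sum_le_card_nsmul _ _ 2 hw1
    have b2 : ∑ e ∈ E2, (S.filter (fun i => i ∈ e)).card ≤ E2.card * 1 :=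
      Finset.sum_le_card_nsmul _ _ 1 hw2
    have b3 : ∑ e ∈ E3, (S.filter (fun i => i ∈ e)).card = 0 :=
      Finset.sum_eq_zero hw3
    omega
  -- root and parent function
  set r : Fin n := ⟨0, hn⟩ with hrdef
  have hrS : r ∈ S := by simp [hS, hrdef]; omega
  choose f hf using fun v (hv : v ≠ (r : Fin n)) => exists_closer hconn hv
  set F : Fin n → Sym2 (Fin n) := fun v => if h : v = r then s(v, v) else s(v, f v h) with hF
  have hFmem : ∀ v, (hv : v ≠ r) → F v ∈ E ∧ v ∈ F v ∧ (f v hv) ∈ F v ∧ G.Adj v (f v hv) := by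
    intro v hv
    have := hf v hv
    simp only [hF, dif_neg hv]
    exact ⟨SimpleGraph.mem_edgeFinset.mpr ((SimpleGraph.mem_edgeSet G).mpr this.1),
      Sym2.mem_mk_left _ _, Sym2.mem_mk_right _ _, this.1⟩
  have hFinj : ∀ v1, v1 ≠ r → ∀ v2, v2 ≠ r → F v1 = F v2 → v1 = v2 := by
    intro v1 h1 v2 h2 heq
    simp only [hF, dif_neg h1, dif_neg h2, Sym2.eq_iff] at heq
    rcases heq with ⟨h, _⟩ | ⟨ha, hb⟩
    · exact h
    · exfalso
      have d1 := (hf v1 h1).2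
      have d2 := (hf v2 h2).2
      rw [hb] at d1
      rw [← ha] at d2
      omega
  -- n - s ≤ E2.card + E3.card
  have h23 : n - s ≤ E2.card + E3.card := by
    have hcompl : n - s ≤ (univ.filter (fun v : Fin n => v ∉ S)).card := by
      have : (univ.filter (fun v : Fin n => v ∉ S)).card = n - S.card := by
        rw [Finset.filter_not, Finset.card_sdiff_of_subset (by simp [Finset.filter_subset])]
        congr 1
        · simp
        · rw [Finset.filter_univ_mem]
      omega
    refine le_trans hcompl (le_trans ?_ (Finset.card_union_le E2 E3))
    apply Finset.card_le_card_of_injOn F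
    · intro v hv
      simp only [Finset.mem_coe, Finset.mem_filter, Finset.mem_univ, true_and] at hv
      have hvr : v ≠ r := fun h => hv (h ▸ hrS)
      obtain ⟨hFE, hvF, _, _⟩ := hFmem v hvr
      have hn1 : ¬ P1 (F v) := by
        intro h1
        exact hv (h1 v hvF)
      by_cases h3 : P3 (F v)
      · exact Finset.mem_union_right _ (Finset.mem_filter.mpr ⟨hFE, h3⟩)
      · exact Finset.mem_union_left _ (Finset.mem_filter.mpr ⟨hFE, hn1, h3⟩)
    · intro v1 hv1 v2 hv2 heq
      simp only [Finset.coe_filter, Set.mem_setOf_eq, Finset.mem_univ, true_and] at hv1 hv2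
      exact hFinj v1 (fun h => hv1 (h ▸ hrS)) v2 (fun h => hv2 (h ▸ hrS)) heq
  -- U
  set U : Finset (Fin n) := univ.filter (fun v => v ∉ S ∧ ∀ u ∈ S, ¬ G.Adj u v) with hU
  have hU3 : U.card ≤ E3.card := by
    apply Finset.card_le_card_of_injOn F
    · intro u hu
      simp only [Finset.mem_coe, hU, Finset.mem_filter, Finset.mem_univ, true_and] at hu
      obtain ⟨huS, hund⟩ := hu
      have hur : u ≠ r := fun h => huS (h ▸ hrS)
      obtain ⟨hFE, huF, hfF, hadj⟩ := hFmem u hur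
      refine Finset.mem_filter.mpr ⟨hFE, ?_⟩
      intro x hx
      simp only [hF, dif_neg hur, Sym2.mem_iff] at hx
      rcases hx with rfl | rfl
      · exact huS
      · intro hfS
        exact hund _ hfS hadj.symm
    · intro v1 hv1 v2 hv2 heq
      simp only [hU, Finset.coe_filter, Set.mem_setOf_eq, Finset.mem_univ, true_and] at hv1 hv2
      exact hFinj v1 (fun h => hv1.1 (h ▸ hrS)) v2 (fun h => hv2.1 (h ▸ hrS)) heq
  -- domination
  have hdom : domNum G ≤ S.card + U.card := by
    have hDdom : DomSet G ↑(S ∪ U) := by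
      intro v hv
      simp only [Finset.coe_union, Set.mem_union, Finset.mem_coe] at hv
      push_neg at hv
      obtain ⟨hvS, hvU⟩ := hv
      simp only [hU, Finset.mem_filter, Finset.mem_univ, true_and, not_and, not_forall] at hvU
      obtain ⟨u, huS, hadj⟩ := hvU hvS
      push_neg at hadj
      exact ⟨u, by simp [Finset.mem_union, huS], hadj⟩
    exact le_trans (Nat.sInf_le ⟨S ∪ U, rfl, hDdom⟩) (Finset.card_union_le S U)
  omega
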